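/- Let n ≥ 3 and let L be an ortholattice in which the n-Go equation holds for all elements. Then for all a₁, …, aₙ ∈ L and all indices 1 ≤ j ≤ n, 1 ≤ k ≤ n: a₁ ≡γ aₙ ≤ aⱼ → aₖ. -/

import Mathlib

/-- An ortholattice: a bounded lattice with an orthocomplementation. -/
class Ortholattice (α : Type*) extends Lattice α, BoundedOrder α, Compl α where
  compl_compl : ∀ a : α, aᶜᶜ = a
  compl_le_compl : ∀ a b : α, a ≤ b → bᶜ ≤ aᶜ
  inf_compl_self : ∀ a : α, a ⊓ aᶜ = ⊥
  sup_compl_self : ∀ a : α, a ⊔ aᶜ = ⊤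

/-- The Sasaki hook `a → b := a' ⊔ (a ⊓ b)`. -/
def sasaki {α : Type*} [Ortholattice α] (a b : α) : α := aᶜ ⊔ (a ⊓ b)

/-- The Godowski identity `a₁ ≡γ aₙ = (a₁→a₂) ⊓ ⋯ ⊓ (aₙ₋₁→aₙ) ⊓ (aₙ→a₁)`. -/
def goFwd {α : Type*} [Ortholattice α] (n : ℕ) (hn : 3 ≤ n) (a : Fin n → α) : α :=
  Finset.univ.inf fun i : Fin n => sasaki (a i) (a (i + ⟨1, by omega⟩))

/-- The Godowski identity `aₙ ≡γ a₁ = (aₙ→aₙ₋₁) ⊓ ⋯ ⊓ (a₂→a₁) ⊓ (a₁→aₙ)`. -/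
def goBwd {α : Type*} [Ortholattice α] (n : ℕ) (hn : 3 ≤ n) (a : Fin n → α) : α :=
  Finset.univ.inf fun i : Fin n => sasaki (a (i + ⟨1, by omega⟩)) (a i)

namespace GodowskiAux

variable {α : Type*} [Ortholattice α]

lemma cc (a : α) : aᶜᶜ = a := Ortholattice.compl_compl a

lemma cle {a b : α} (h : a ≤ b) : bᶜ ≤ aᶜ := Ortholattice.compl_le_compl a b h

lemma compl_sup_self' (a : α) : aᶜ ⊔ a = ⊤ := by
  rw [sup_comm]; exact Ortholattice.sup_compl_self a

lemma compl_top : (⊤ : α)ᶜ = ⊥ := by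
  have h := Ortholattice.inf_compl_self (⊤ : α)
  rwa [top_inf_eq] at h

lemma sasaki_self (a : α) : sasaki a a = ⊤ := by
  rw [sasaki, inf_idem, compl_sup_self']

lemma sasaki_top_right (a : α) : sasaki a ⊤ = ⊤ := by
  rw [sasaki, inf_top_eq, compl_sup_self']

lemma sasaki_top_left (a : α) : sasaki ⊤ a = a := by
  rw [sasaki, compl_top, top_inf_eq, bot_sup_eq]

lemma sasaki_eq_top_of_le {a b : α} (h : a ≤ b) : sasaki a b = ⊤ := by
  rw [sasaki, inf_eq_left.mpr h, compl_sup_self']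

lemma sasaki_mono_right (a : α) {b c : α} (h : b ≤ c) : sasaki a b ≤ sasaki a c :=
  sup_le_sup_left (inf_le_inf_left a h) _

lemma compl_sup_eq (a b : α) : (a ⊔ b)ᶜ = aᶜ ⊓ bᶜ := by
  apply le_antisymm
  · exact le_inf (cle le_sup_left) (cle le_sup_right)
  · have h : a ⊔ b ≤ (aᶜ ⊓ bᶜ)ᶜ := by
      apply sup_le
      · have := cle (inf_le_left (a := aᶜ) (b := bᶜ)); rwa [cc] at this
      · have := cle (inf_le_right (a := aᶜ) (b := bᶜ)); rwa [cc] at this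
    have := cle h; rwa [cc] at this

lemma compl_inf_eq (a b : α) : (a ⊓ b)ᶜ = aᶜ ⊔ bᶜ := by
  have h := compl_sup_eq aᶜ bᶜ
  rw [cc, cc] at h
  calc (a ⊓ b)ᶜ = (aᶜ ⊔ bᶜ)ᶜᶜ := by rw [h]
  _ = aᶜ ⊔ bᶜ := cc _

/-- The tuple `(x, y, z, z, …, z)`. -/
def tri (n : ℕ) (x y z : α) : Fin n → α :=
  fun i => if (i : ℕ) = 0 then x else if (i : ℕ) = 1 then y else z

lemma tri_zero (n : ℕ) (x y z : α) (i : Fin n) (h : (i : ℕ) = 0) :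
    tri n x y z i = x := by simp [tri, h]

lemma tri_one (n : ℕ) (x y z : α) (i : Fin n) (h : (i : ℕ) = 1) :
    tri n x y z i = y := by simp [tri, h]

lemma tri_rest (n : ℕ) (x y z : α) (i : Fin n) (h0 : (i : ℕ) ≠ 0) (h1 : (i : ℕ) ≠ 1) :
    tri n x y z i = z := by simp [tri, h0, h1]

lemma fwd_le (n : ℕ) (hn : 3 ≤ n) (x y z : α) :
    sasaki x y ⊓ (sasaki y z ⊓ sasaki z x) ≤ goFwd n hn (tri n x y z) := by
  apply Finset.le_inf
  intro i _
  have hv : (i : ℕ) < n := i.isLt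
  have hadd : ((i + ⟨1, by omega⟩ : Fin n) : ℕ) = ((i : ℕ) + 1) % n := by
    simp [Fin.add_def]
  by_cases h0 : (i : ℕ) = 0
  · have h1 : ((i + ⟨1, by omega⟩ : Fin n) : ℕ) = 1 := by
      rw [hadd, h0]; exact Nat.mod_eq_of_lt (by omega)
    rw [tri_zero n x y z i h0, tri_one n x y z _ h1]
    exact inf_le_left
  · by_cases h1 : (i : ℕ) = 1
    · have h2 : ((i + ⟨1, by omega⟩ : Fin n) : ℕ) = 2 := by
        rw [hadd, h1]; exact Nat.mod_eq_of_lt (by omega)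
      rw [tri_one n x y z i h1, tri_rest n x y z _ (by omega) (by omega)]
      exact le_trans inf_le_right inf_le_left
    · by_cases hl : (i : ℕ) = n - 1
      · have h2 : ((i + ⟨1, by omega⟩ : Fin n) : ℕ) = 0 := by
          rw [hadd, hl, Nat.sub_add_cancel (by omega), Nat.mod_self]
        rw [tri_rest n x y z i h0 h1, tri_zero n x y z _ h2]
        exact le_trans inf_le_right inf_le_right
      · have h2 : ((i + ⟨1, by omega⟩ : Fin n) : ℕ) = (i : ℕ) + 1 := by
          rw [hadd]; exact Nat.mod_eq_of_lt (by omega)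
        rw [tri_rest n x y z i h0 h1, tri_rest n x y z _ (by omega) (by omega),
          sasaki_self]
        exact le_top

lemma bwd_le1 (n : ℕ) (hn : 3 ≤ n) (x y z : α) :
    goBwd n hn (tri n x y z) ≤ sasaki y x := by
  have h := Finset.inf_le (f := fun i : Fin n =>
      sasaki (tri n x y z (i + ⟨1, by omega⟩)) (tri n x y z i))
    (Finset.mem_univ (⟨0, by omega⟩ : Fin n))
  have hv : (((⟨0, by omega⟩ : Fin n) + ⟨1, by omega⟩ : Fin n) : ℕ) = 1 := by
    simp only [Fin.add_def]
    exact Nat.mod_eq_of_lt (by omega)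
  rw [tri_zero n x y z ⟨0, by omega⟩ rfl,
    tri_one n x y z ((⟨0, by omega⟩ : Fin n) + ⟨1, by omega⟩) hv] at h
  exact h

lemma bwd_le2 (n : ℕ) (hn : 3 ≤ n) (x y z : α) :
    goBwd n hn (tri n x y z) ≤ sasaki z y := by
  have h := Finset.inf_le (f := fun i : Fin n =>
      sasaki (tri n x y z (i + ⟨1, by omega⟩)) (tri n x y z i))
    (Finset.mem_univ (⟨1, by omega⟩ : Fin n))
  simp only at h
  have hv : ((⟨1, by omega⟩ : Fin n) + ⟨1, by omega⟩ : Fin n).val = 2 := by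
    simp only [Fin.add_def]
    exact Nat.mod_eq_of_lt (by omega)
  rw [tri_one n x y z ⟨1, by omega⟩ rfl,
    tri_rest n x y z ((⟨1, by omega⟩ : Fin n) + ⟨1, by omega⟩)
      (by omega) (by omega)] at h
  exact h

lemma bwd_le3 (n : ℕ) (hn : 3 ≤ n) (x y z : α) :
    goBwd n hn (tri n x y z) ≤ sasaki x z := by
  have h := Finset.inf_le (f := fun i : Fin n =>
      sasaki (tri n x y z (i + ⟨1, by omega⟩)) (tri n x y z i))
    (Finset.mem_univ (⟨n - 1, by omega⟩ : Fin n))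
  have hv : ((⟨n - 1, by omega⟩ : Fin n) + ⟨1, by omega⟩ : Fin n).val = 0 := by
    simp only [Fin.add_def]
    rw [Nat.sub_add_cancel (by omega), Nat.mod_self]
  rw [tri_rest n x y z ⟨n - 1, by omega⟩ (by simp; omega) (by simp; omega),
    tri_zero n x y z ((⟨n - 1, by omega⟩ : Fin n) + ⟨1, by omega⟩) hv] at h
  exact h

end GodowskiAux

open GodowskiAux Fin.NatCast Fin.CommRing in
/-- In any ortholattice satisfying the n-Go equation (`n ≥ 3`), one has
`a₁ ≡γ aₙ ≤ aⱼ → aₖ` for all indices `j, k`. -/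
theorem stmt_12 {α : Type*} [Ortholattice α] (n : ℕ) (hn : 3 ≤ n)
    (hGo : ∀ a : Fin n → α, goFwd n hn a = goBwd n hn a)
    (a : Fin n → α) (j k : Fin n) :
    goFwd n hn a ≤ sasaki (a j) (a k) := by
  classical
  haveI : NeZero n := ⟨by omega⟩
  set g := goFwd n hn a with hg
  -- 3-cycle reversal from hGo on the tuple (x, y, z, z, …, z)
  have htriple : ∀ x y z : α, g ≤ sasaki x y → g ≤ sasaki y z → g ≤ sasaki z x →
      g ≤ sasaki y x ∧ g ≤ sasaki z y ∧ g ≤ sasaki x z := by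
    intro x y z hxy hyz hzx
    have h : g ≤ goFwd n hn (tri n x y z) :=
      le_trans (le_inf hxy (le_inf hyz hzx)) (fwd_le n hn x y z)
    rw [hGo (tri n x y z)] at h
    exact ⟨h.trans (bwd_le1 n hn x y z), h.trans (bwd_le2 n hn x y z),
      h.trans (bwd_le3 n hn x y z)⟩
  -- orthomodular law from hGo on the tuple (x, w, ⊤, ⊤, …, ⊤)
  have homl : ∀ x w : α, w ≤ x → x ⊓ (xᶜ ⊔ w) ≤ w := by
    intro x w hwx
    have hA : x ⊓ (xᶜ ⊔ w) ≤ sasaki x w := by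
      rw [sasaki, inf_eq_right.mpr hwx]; exact inf_le_right
    have hC : x ⊓ (xᶜ ⊔ w) ≤ sasaki ⊤ x := by
      rw [sasaki_top_left]; exact inf_le_left
    have h : x ⊓ (xᶜ ⊔ w) ≤ goFwd n hn (tri n x w ⊤) :=
      le_trans (le_inf hA (le_inf (by rw [sasaki_top_right]; exact le_top) hC))
        (fwd_le n hn x w ⊤)
    rw [hGo (tri n x w ⊤)] at h
    have h2 := h.trans (bwd_le2 n hn x w ⊤)
    rwa [sasaki_top_left] at h2
  -- the dual form of the orthomodular law
  have hdual : ∀ x c : α, xᶜ ≤ c → c ≤ xᶜ ⊔ (x ⊓ c) := by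
    intro x c h
    have hw : cᶜ ≤ x := by have := cle h; rwa [cc] at this
    have h1 : x ⊓ (xᶜ ⊔ cᶜ) ≤ cᶜ := homl x cᶜ hw
    have h2 := cle h1
    rw [cc] at h2
    calc c ≤ (x ⊓ (xᶜ ⊔ cᶜ))ᶜ := h2
    _ = xᶜ ⊔ (xᶜ ⊔ cᶜ)ᶜ := compl_inf_eq _ _
    _ = xᶜ ⊔ (xᶜᶜ ⊓ cᶜᶜ) := by rw [compl_sup_eq]
    _ = xᶜ ⊔ (x ⊓ c) := by rw [cc, cc]
  -- Sasaki adjunction (one direction)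
  have hadj : ∀ y z : α, g ≤ sasaki y z → y ⊓ (yᶜ ⊔ g) ≤ y ⊓ z := by
    intro y z h
    have h2 : yᶜ ⊔ g ≤ yᶜ ⊔ (y ⊓ z) := by
      calc yᶜ ⊔ g ≤ yᶜ ⊔ (yᶜ ⊔ (y ⊓ z)) := sup_le_sup_left h _
      _ = yᶜ ⊔ (y ⊓ z) := by rw [← sup_assoc, sup_idem]
    calc y ⊓ (yᶜ ⊔ g) ≤ y ⊓ (yᶜ ⊔ (y ⊓ z)) := inf_le_inf_left y h2
    _ ≤ y ⊓ z := homl y (y ⊓ z) inf_le_left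
  -- the Sasaki projection of g is reached by a hook
  have hphi : ∀ y : α, g ≤ sasaki y (y ⊓ (yᶜ ⊔ g)) := by
    intro y
    have h : g ≤ yᶜ ⊔ (y ⊓ (yᶜ ⊔ g)) :=
      le_trans le_sup_right (hdual y (yᶜ ⊔ g) le_sup_left)
    rw [sasaki, ← inf_assoc, inf_idem]
    exact h
  -- transitivity
  have htrans : ∀ x y z : α, g ≤ sasaki x y → g ≤ sasaki y z → g ≤ sasaki y x →
      g ≤ sasaki x z := by
    intro x y z hxy hyz hyx
    set p := y ⊓ (yᶜ ⊔ g) with hp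
    have hpx : p ≤ x := (hadj y x hyx).trans inf_le_right
    have hpz : p ≤ z := (hadj y z hyz).trans inf_le_right
    have h1 : g ≤ sasaki p x := by rw [sasaki_eq_top_of_le hpx]; exact le_top
    have h2 : g ≤ sasaki y p := hphi y
    obtain ⟨hxp, -, -⟩ := htriple p x y h1 hxy h2
    exact hxp.trans (sasaki_mono_right x hpz)
  -- base edges
  have one_def : (⟨1, by omega⟩ : Fin n) = 1 := by
    apply Fin.ext; rw [Fin.val_one']
    exact (Nat.mod_eq_of_lt (by omega)).symm
  have hbase : ∀ i : Fin n, g ≤ sasaki (a i) (a (i + 1)) := by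
    intro i
    have h : g ≤ sasaki (a i) (a (i + ⟨1, by omega⟩)) := by
      rw [hg]; exact Finset.inf_le (Finset.mem_univ i)
    rwa [one_def] at h
  have hrev : ∀ i : Fin n, g ≤ sasaki (a (i + 1)) (a i) := by
    intro i
    have h : goBwd n hn a ≤ sasaki (a (i + ⟨1, by omega⟩)) (a i) :=
      Finset.inf_le (Finset.mem_univ i)
    rw [one_def] at h
    exact le_trans (le_of_eq (hg.trans (hGo a))) h
  -- main induction on the distance
  have key : ∀ d : ℕ, ∀ j' : Fin n,
      g ≤ sasaki (a j') (a (j' + (d : Fin n))) ∧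
      g ≤ sasaki (a (j' + (d : Fin n))) (a j') := by
    intro d
    induction d with
    | zero =>
      intro j'
      simp only [Nat.cast_zero, add_zero]
      constructor <;> (rw [sasaki_self]; exact le_top)
    | succ d ih =>
      intro j'
      have hy := ih j'
      have hcast : ((d + 1 : ℕ) : Fin n) = (d : Fin n) + 1 := by push_cast; ring
      rw [hcast, ← add_assoc]
      set y := j' + (d : Fin n) with hyd
      have h1 : g ≤ sasaki (a y) (a (y + 1)) := hbase y
      have h2 : g ≤ sasaki (a (y + 1)) (a y) := hrev y
      exact ⟨htrans (a j') (a y) (a (y + 1)) hy.1 h1 hy.2,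
        htrans (a (y + 1)) (a y) (a j') h2 hy.2 h1⟩
  have hd := (key (k - j).val j).1
  have hjk : j + ((k - j).val : Fin n) = k := by
    rw [Fin.cast_val_eq_self]; ring
  rwa [hjk] at hd
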